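/- arXiv:1411.5172 — 2 statements merged into one kernel-verified Lean document; each statement's English description precedes it below -/
import Mathlib

section
/- Let C be a real symmetric p×p matrix with spectral decomposition C = U Λ Uᵀ, U orthogonal and Λ diagonal. Then the matrix U Λ₊ Uᵀ, where Λ₊ replaces each eigenvalue by max(λᵢ, 0), is the unique minimizer of ‖X − C‖_F over the cone of symmetric positive semidefinite matrices X. -/
open Matrix

lemma clip_le (dd y : ℝ) (hy : 0 ≤ y) : (max dd 0 - dd)^2 ≤ (y - dd)^2 := by
  rcases le_total dd 0 with h|h
  · rw [max_eq_right h]; nlinarith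
  · rw [max_eq_left h]; nlinarith

lemma clip_eq (dd y : ℝ) (hy : 0 ≤ y) (h : (y - dd)^2 = (max dd 0 - dd)^2) :
    y = max dd 0 := by
  rcases le_total dd 0 with h'|h'
  · rw [max_eq_right h'] at h ⊢; nlinarith
  · rw [max_eq_left h'] at h ⊢; nlinarith

lemma SS_trace {p : ℕ} (M : Matrix (Fin p) (Fin p) ℝ) :
    ∑ i, ∑ j, (M i j)^2 = (Mᵀ * M).trace := by
  simp only [Matrix.trace, Matrix.diag, Matrix.mul_apply, Matrix.transpose_apply, sq]
  exact Finset.sum_comm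

lemma SS_conj {p : ℕ} (U M : Matrix (Fin p) (Fin p) ℝ)
    (hU : U * Uᵀ = 1) :
    ∑ i, ∑ j, ((Uᵀ * M * U) i j)^2 = ∑ i, ∑ j, (M i j)^2 := by
  rw [SS_trace, SS_trace]
  have h1 : (Uᵀ * M * U)ᵀ * (Uᵀ * M * U) = Uᵀ * (Mᵀ * M) * U := by
    rw [Matrix.transpose_mul, Matrix.transpose_mul, Matrix.transpose_transpose]
    simp only [Matrix.mul_assoc]
    rw [← Matrix.mul_assoc U Uᵀ, hU, Matrix.one_mul]
  rw [h1, Matrix.trace_mul_cycle, ← Matrix.mul_assoc, hU, Matrix.one_mul]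

lemma conj_quad {p : ℕ} (U A : Matrix (Fin p) (Fin p) ℝ) (v : Fin p → ℝ) :
    v ⬝ᵥ (U * A * Uᵀ) *ᵥ v = (Uᵀ *ᵥ v) ⬝ᵥ A *ᵥ (Uᵀ *ᵥ v) := by
  rw [← Matrix.mulVec_mulVec, ← Matrix.mulVec_mulVec, Matrix.dotProduct_mulVec]
  congr 1
  rw [← Matrix.vecMul_transpose, Matrix.transpose_transpose]

lemma diag_quad_nonneg {p : ℕ} (f : Fin p → ℝ) (hf : ∀ i, 0 ≤ f i) (w : Fin p → ℝ) :
    0 ≤ w ⬝ᵥ (Matrix.diagonal f) *ᵥ w := by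
  simp only [dotProduct, Matrix.mulVec_diagonal]
  exact Finset.sum_nonneg fun i _ => by nlinarith [hf i, sq_nonneg (w i)]

lemma diag_entry_nonneg {p : ℕ} (Y : Matrix (Fin p) (Fin p) ℝ)
    (h : ∀ v, 0 ≤ v ⬝ᵥ Y *ᵥ v) (i : Fin p) : 0 ≤ Y i i := by
  have := h (Pi.single i 1)
  simpa [dotProduct, Matrix.mulVec, Pi.single_apply, Finset.sum_ite_eq,
    Finset.sum_ite_eq'] using this

lemma sandwich_id {p : ℕ} (U X : Matrix (Fin p) (Fin p) ℝ)
    (hU : U * Uᵀ = 1) : U * (Uᵀ * X * U) * Uᵀ = X := by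
  simp only [Matrix.mul_assoc]
  rw [hU, Matrix.mul_one, ← Matrix.mul_assoc, hU, Matrix.one_mul]


/-- For a symmetric matrix `C = U Λ Uᵀ` with `U` orthogonal and `Λ` diagonal,
the matrix `U Λ₊ Uᵀ` (eigenvalues clipped at 0) is the unique Frobenius-norm
projection of `C` onto the cone of symmetric PSD matrices. -/
theorem psd_projection_eigenvalue_clipping {p : ℕ}
    (C U : Matrix (Fin p) (Fin p) ℝ) (d : Fin p → ℝ)
    (hCsymm : Cᵀ = C)
    (hU : U * Uᵀ = 1) (hU' : Uᵀ * U = 1)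
    (hC : C = U * Matrix.diagonal d * Uᵀ) :
    let Xstar := U * Matrix.diagonal (fun i => max (d i) 0) * Uᵀ
    let frob : Matrix (Fin p) (Fin p) ℝ → ℝ :=
      fun M => Real.sqrt (∑ i, ∑ j, (M i j)^2)
    (Xstarᵀ = Xstar ∧ ∀ v : Fin p → ℝ, 0 ≤ v ⬝ᵥ Xstar *ᵥ v) ∧
    (∀ X : Matrix (Fin p) (Fin p) ℝ, Xᵀ = X → (∀ v : Fin p → ℝ, 0 ≤ v ⬝ᵥ X *ᵥ v) →
      frob (Xstar - C) ≤ frob (X - C)) ∧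
    (∀ X : Matrix (Fin p) (Fin p) ℝ, Xᵀ = X → (∀ v : Fin p → ℝ, 0 ≤ v ⬝ᵥ X *ᵥ v) →
      frob (X - C) = frob (Xstar - C) → X = Xstar) := by
  intro Xstar frob
  set dp : Fin p → ℝ := fun i => max (d i) 0 with hdp
  -- conjugations
  have hconjC : Uᵀ * C * U = Matrix.diagonal d := by
    rw [hC]; simp only [Matrix.mul_assoc]
    rw [hU', Matrix.mul_one, ← Matrix.mul_assoc, hU', Matrix.one_mul]
  have hconjX : Uᵀ * Xstar * U = Matrix.diagonal dp := by
    show Uᵀ * (U * Matrix.diagonal dp * Uᵀ) * U = Matrix.diagonal dp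
    simp only [Matrix.mul_assoc]
    rw [hU', Matrix.mul_one, ← Matrix.mul_assoc, hU', Matrix.one_mul]
  -- the key SS inequality / equality analysis
  have SSkey : ∀ X : Matrix (Fin p) (Fin p) ℝ, (∀ v, 0 ≤ v ⬝ᵥ X *ᵥ v) →
      (∑ i, ∑ j, ((Xstar - C) i j)^2 ≤ ∑ i, ∑ j, ((X - C) i j)^2) ∧
      ((∑ i, ∑ j, ((X - C) i j)^2 = ∑ i, ∑ j, ((Xstar - C) i j)^2) → X = Xstar) := by
    intro X hXpsd
    set Y := Uᵀ * X * U with hY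
    have hYpsd : ∀ v, 0 ≤ v ⬝ᵥ Y *ᵥ v := by
      intro v
      have := conj_quad Uᵀ X v
      rw [Matrix.transpose_transpose] at this
      rw [hY, this]
      exact hXpsd _
    have hYdiag : ∀ i, 0 ≤ Y i i := diag_entry_nonneg Y hYpsd
    have hXc : Uᵀ * (X - C) * U = Y - Matrix.diagonal d := by
      rw [Matrix.mul_sub, Matrix.sub_mul, hconjC]
    have hXsc : Uᵀ * (Xstar - C) * U = Matrix.diagonal dp - Matrix.diagonal d := by
      rw [Matrix.mul_sub, Matrix.sub_mul, hconjC, hconjX]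
    have hSSX : ∑ i, ∑ j, ((X - C) i j)^2
        = ∑ i, ∑ j, ((Y - Matrix.diagonal d) i j)^2 := by
      rw [← SS_conj U (X - C) hU, hXc]
    have hSSXs : ∑ i, ∑ j, ((Xstar - C) i j)^2
        = ∑ i, ∑ j, ((Matrix.diagonal dp - Matrix.diagonal d) i j)^2 := by
      rw [← SS_conj U (Xstar - C) hU, hXsc]
    have hentry : ∀ i j, ((Matrix.diagonal dp - Matrix.diagonal d) i j)^2
        ≤ ((Y - Matrix.diagonal d) i j)^2 := by
      intro i j
      by_cases hij : i = j
      · subst hij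
        simp only [Matrix.sub_apply, Matrix.diagonal_apply_eq]
        exact clip_le (d i) (Y i i) (hYdiag i)
      · simp only [Matrix.sub_apply, Matrix.diagonal_apply_ne _ hij, sub_zero,
          sub_self]
        simpa using sq_nonneg (Y i j)
    have hle : ∑ i, ∑ j, ((Matrix.diagonal dp - Matrix.diagonal d) i j)^2
        ≤ ∑ i, ∑ j, ((Y - Matrix.diagonal d) i j)^2 :=
      Finset.sum_le_sum fun i _ => Finset.sum_le_sum fun j _ => hentry i j
    constructor
    · rw [hSSX, hSSXs]; exact hle
    · intro heq
      rw [hSSX, hSSXs] at heq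
      have houter := (Finset.sum_eq_sum_iff_of_le
        (fun i _ => Finset.sum_le_sum fun j _ => hentry i j)).mp heq.symm
      have hentryeq : ∀ i j, ((Y - Matrix.diagonal d) i j)^2
          = ((Matrix.diagonal dp - Matrix.diagonal d) i j)^2 := by
        intro i j
        have := (Finset.sum_eq_sum_iff_of_le (fun j _ => hentry i j)).mp
          (houter i (Finset.mem_univ i))
        exact (this j (Finset.mem_univ j)).symm
      have hYeq : Y = Matrix.diagonal dp := by
        ext i j
        by_cases hij : i = j
        · subst hij
          have h := hentryeq i i
          simp only [Matrix.sub_apply, Matrix.diagonal_apply_eq] at h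
          rw [Matrix.diagonal_apply_eq]
          exact clip_eq (d i) (Y i i) (hYdiag i) h
        · have h := hentryeq i j
          simp only [Matrix.sub_apply, Matrix.diagonal_apply_ne _ hij, sub_zero,
            sub_self, ne_eq, OfNat.ofNat_ne_zero, not_false_eq_true, zero_pow] at h
          rw [Matrix.diagonal_apply_ne _ hij]
          exact pow_eq_zero_iff two_ne_zero |>.mp h
      have : U * Y * Uᵀ = X := sandwich_id U X hU
      rw [hYeq] at this
      exact this.symm
  refine ⟨⟨?_, ?_⟩, ?_, ?_⟩
  · show (U * Matrix.diagonal dp * Uᵀ)ᵀ = U * Matrix.diagonal dp * Uᵀ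
    rw [Matrix.transpose_mul, Matrix.transpose_mul, Matrix.transpose_transpose,
      Matrix.diagonal_transpose, Matrix.mul_assoc]
  · intro v
    rw [show Xstar = U * Matrix.diagonal dp * Uᵀ from rfl, conj_quad]
    exact diag_quad_nonneg dp (fun i => le_max_right _ _) _
  · intro X hXsymm hXpsd
    exact Real.sqrt_le_sqrt (SSkey X hXpsd).1
  · intro X hXsymm hXpsd heq
    have h1 : (0:ℝ) ≤ ∑ i, ∑ j, ((X - C) i j)^2 :=
      Finset.sum_nonneg fun i _ => Finset.sum_nonneg fun j _ => sq_nonneg _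
    have h2 : (0:ℝ) ≤ ∑ i, ∑ j, ((Xstar - C) i j)^2 :=
      Finset.sum_nonneg fun i _ => Finset.sum_nonneg fun j _ => sq_nonneg _
    exact (SSkey X hXpsd).2 ((Real.sqrt_inj h1 h2).mp heq)
end

section
/- The combined proximal operator identity: for u ∈ ℝⁿ, μ₁, μ₂ > 0, prox of f(v) = μ₁‖v‖₁ + μ₂‖v‖₂ satisfies prox_f(u) = prox_{μ₂‖·‖₂}( prox_{μ₁‖·‖₁}(u) ), i.e., soft-thresholding coordinatewise by μ₁ followed by block shrinkage by μ₂ minimizes μ₁‖v‖₁ + μ₂‖v‖₂ + (1/2)‖v − u‖₂². -/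
/-- Soft-thresholding subgradient facts, coordinatewise. -/
lemma soft_aux (μ₁ t : ℝ) (hμ₁ : 0 < μ₁) :
    ((t - Real.sign t * max (|t| - μ₁) 0) / μ₁) * (Real.sign t * max (|t| - μ₁) 0)
      = |Real.sign t * max (|t| - μ₁) 0| ∧
    |(t - Real.sign t * max (|t| - μ₁) 0) / μ₁| ≤ 1 := by
  rcases lt_trichotomy t 0 with ht | ht | ht
  · rw [Real.sign_of_neg ht, abs_of_neg ht]
    rcases le_total (-t) μ₁ with h | h
    · rw [max_eq_right (by linarith)]
      constructor
      · simp
      · rw [abs_div, abs_of_pos hμ₁, div_le_one hμ₁, abs_of_neg (by linarith : t - -1*0 < 0)]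
        linarith
    · rw [max_eq_left (by linarith)]
      have h1 : (t - -1 * (-t - μ₁)) / μ₁ = -1 := by field_simp; ring
      rw [h1]
      constructor
      · rw [abs_of_nonpos (by nlinarith : -1 * (-t - μ₁) ≤ 0)]; ring
      · simp
  · subst ht; simp [Real.sign_zero]
  · rw [Real.sign_of_pos ht, abs_of_pos ht]
    rcases le_total t μ₁ with h | h
    · rw [max_eq_right (by linarith)]
      constructor
      · simp
      · rw [abs_div, abs_of_pos hμ₁, div_le_one hμ₁, abs_of_pos (by linarith : (0:ℝ) < t - 1*0)]
        linarith
    · rw [max_eq_left (by linarith)]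
      have h1 : (t - 1 * (t - μ₁)) / μ₁ = 1 := by field_simp; ring
      rw [h1]
      constructor
      · rw [abs_of_nonneg (by nlinarith : (0:ℝ) ≤ 1 * (t - μ₁))]; ring
      · simp

/-- Sparse group lasso prox decomposition: coordinatewise soft-thresholding by
`μ₁` followed by block shrinkage by `μ₂` minimizes
`v ↦ μ₁‖v‖₁ + μ₂‖v‖₂ + (1/2)‖v − u‖₂²`. -/
theorem sparse_group_lasso_prox_decomposition {n : ℕ}
    (μ₁ μ₂ : ℝ) (hμ₁ : 0 < μ₁) (hμ₂ : 0 < μ₂)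
    (u : EuclideanSpace ℝ (Fin n)) :
    let s : EuclideanSpace ℝ (Fin n) := WithLp.toLp 2 (fun i => Real.sign (u i) * max (|u i| - μ₁) 0)
    let w : EuclideanSpace ℝ (Fin n) := (max (1 - μ₂ / ‖s‖) 0) • s
    let f : EuclideanSpace ℝ (Fin n) → ℝ :=
      fun v => μ₁ * (∑ i, |v i|) + μ₂ * ‖v‖ + (1/2) * ‖v - u‖^2
    ∀ v, f w ≤ f v := by
  intro s w f v
  have hs : ∀ i, s i = Real.sign (u i) * max (|u i| - μ₁) 0 := fun i => rfl
  set c : ℝ := max (1 - μ₂ / ‖s‖) 0 with hc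
  have hw : w = c • s := rfl
  set M : ℝ := max ‖s‖ μ₂ with hM
  have hM0 : 0 < M := lt_max_of_lt_right hμ₂
  have hc0 : 0 ≤ c := le_max_right _ _
  set p : EuclideanSpace ℝ (Fin n) := WithLp.toLp 2 (fun i => (u i - s i) / μ₁) with hp
  set q : EuclideanSpace ℝ (Fin n) := M⁻¹ • s with hq
  -- coordinatewise facts about p
  have hps : ∀ i, p i * s i = |s i| := fun i => (soft_aux μ₁ (u i) hμ₁).1
  have hp1 : ∀ i, |p i| ≤ 1 := fun i => (soft_aux μ₁ (u i) hμ₁).2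
  have hwi : ∀ i, w i = c * s i := fun i => rfl
  have hqi : ∀ i, q i = M⁻¹ * s i := fun i => rfl
  have hpw : ∀ i, p i * w i = |w i| := by
    intro i
    rw [hwi i, abs_mul, abs_of_nonneg hc0, ← hps i]; ring
  -- q is a unit-ball subgradient of the norm at w
  have hqnorm : ‖q‖ ≤ 1 := by
    rw [hq, norm_smul, Real.norm_eq_abs, abs_of_pos (inv_pos.mpr hM0)]
    have hle : ‖s‖ ≤ M := le_max_left _ _
    calc M⁻¹ * ‖s‖ ≤ M⁻¹ * M :=
          mul_le_mul_of_nonneg_left hle (le_of_lt (inv_pos.mpr hM0))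
      _ = 1 := inv_mul_cancel₀ (ne_of_gt hM0)
  have hqw : (inner ℝ q (w) : ℝ) = ‖w‖ := by
    rw [hq, hw, real_inner_smul_left, real_inner_smul_right,
      real_inner_self_eq_norm_sq, norm_smul, Real.norm_eq_abs, abs_of_nonneg hc0]
    by_cases hsn : ‖s‖ = 0
    · rw [hsn]; ring
    · by_cases hcz : c = 0
      · rw [hcz]; ring
      · have hcpos : 0 < 1 - μ₂ / ‖s‖ := by
          by_contra hle
          exact hcz (max_eq_right (not_lt.mp hle))
        have hsp : 0 < ‖s‖ := lt_of_le_of_ne (norm_nonneg s) (Ne.symm hsn)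
        have hms : μ₂ < ‖s‖ := (div_lt_one hsp).mp (sub_pos.mp hcpos)
        have hMs : M = ‖s‖ := max_eq_left (le_of_lt hms)
        rw [hMs]
        field_simp
  -- stationarity
  have hzero : μ₁ • p + μ₂ • q + w - u = 0 := by
    ext i
    have happ : (μ₁ • p + μ₂ • q + w - u) i = μ₁ * p i + μ₂ * q i + w i - u i := rfl
    rw [happ, hqi i, hwi i, hp]
    simp only
    have h1 : μ₁ * ((u i - s i) / μ₁) = u i - s i := by field_simp
    rw [h1]
    have key : μ₂ * (M⁻¹ * s i) + c * s i - s i = 0 := by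
      by_cases hsm : ‖s‖ ≤ μ₂
      · have hMm : M = μ₂ := max_eq_right hsm
        have h2 : μ₂ * (M⁻¹ * s i) = s i := by rw [hMm]; field_simp
        rw [h2]
        by_cases hsn : ‖s‖ = 0
        · have : s = 0 := norm_eq_zero.mp hsn
          rw [this]; simp
        · have hsp : 0 < ‖s‖ := lt_of_le_of_ne (norm_nonneg s) (Ne.symm hsn)
          have : 1 - μ₂ / ‖s‖ ≤ 0 := sub_nonpos.mpr ((one_le_div hsp).mpr hsm)
          have hcz : c = 0 := max_eq_right this
          rw [hcz]; ring
      · push_neg at hsm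
        have hMs : M = ‖s‖ := max_eq_left (le_of_lt hsm)
        have hsp : 0 < ‖s‖ := lt_trans hμ₂ hsm
        have hcv : c = 1 - μ₂ / ‖s‖ :=
          max_eq_left (sub_nonneg.mpr (le_of_lt ((div_lt_one hsp).mpr hsm)))
        rw [hMs, hcv]
        field_simp
        ring
    have hz : (0 : EuclideanSpace ℝ (Fin n)) i = 0 := rfl
    rw [hz]
    linear_combination key
  -- inner product expansions
  have hinner_p : (inner ℝ p (v - w) : ℝ) = ∑ i, p i * (v i - w i) := by
    rw [PiLp.inner_apply]
    apply Finset.sum_congr rfl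
    intro i _
    simp only [RCLike.inner_apply, conj_trivial]
    have : (v - w) i = v i - w i := rfl
    rw [this]; ring
  -- l1 subgradient inequality
  have e1 : (∑ i, |w i|) + (inner ℝ p (v - w) : ℝ) ≤ ∑ i, |v i| := by
    rw [hinner_p]
    have : (∑ i, |w i|) + ∑ i, p i * (v i - w i) = ∑ i, p i * v i := by
      rw [← Finset.sum_add_distrib]
      congr 1; funext i
      rw [← hpw i]; ring
    rw [this]
    apply Finset.sum_le_sum
    intro i _
    calc p i * v i ≤ |p i * v i| := le_abs_self _
      _ = |p i| * |v i| := abs_mul _ _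
      _ ≤ 1 * |v i| := mul_le_mul_of_nonneg_right (hp1 i) (abs_nonneg _)
      _ = |v i| := one_mul _
  -- l2 subgradient inequality
  have e2 : ‖w‖ + (inner ℝ q (v - w) : ℝ) ≤ ‖v‖ := by
    rw [inner_sub_right, hqw]
    have : (inner ℝ q (v) : ℝ) ≤ ‖v‖ := by
      calc (inner ℝ q (v) : ℝ) ≤ ‖q‖ * ‖v‖ := real_inner_le_norm q v
        _ ≤ 1 * ‖v‖ := mul_le_mul_of_nonneg_right hqnorm (norm_nonneg v)
        _ = ‖v‖ := one_mul _
    linarith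
  -- quadratic expansion
  have e3 : ‖v - u‖^2 = ‖v - w‖^2 + 2 * (inner ℝ (v - w) (w - u) : ℝ) + ‖w - u‖^2 := by
    have h : v - u = (v - w) + (w - u) := by abel
    rw [h, norm_add_sq_real]
  -- stationarity inner product
  have e4 : μ₁ * (inner ℝ p (v - w) : ℝ) + μ₂ * (inner ℝ q (v - w) : ℝ) + (inner ℝ (w - u) (v - w) : ℝ) = 0 := by
    have h : μ₁ * (inner ℝ p (v - w) : ℝ) + μ₂ * (inner ℝ q (v - w) : ℝ) + (inner ℝ (w - u) (v - w) : ℝ)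
        = (inner ℝ (μ₁ • p + μ₂ • q + w - u) (v - w) : ℝ) := by
      rw [show μ₁ • p + μ₂ • q + w - u = (μ₁ • p + μ₂ • q) + (w - u) by abel,
        inner_add_left, inner_add_left, real_inner_smul_left, real_inner_smul_left]
      rw [real_inner_smul_left, real_inner_smul_left]
    rw [h, hzero, inner_zero_left]
  have e5 : (inner ℝ (v - w) (w - u) : ℝ) = (inner ℝ (w - u) (v - w) : ℝ) := real_inner_comm _ _
  have hsq : 0 ≤ ‖v - w‖^2 := sq_nonneg _
  have hA := mul_le_mul_of_nonneg_left e1 (le_of_lt hμ₁)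
  have hB := mul_le_mul_of_nonneg_left e2 (le_of_lt hμ₂)
  rw [mul_add] at hA hB
  show f w ≤ f v
  simp only [f]
  clear_value s w f p q c M
  clear hs hc hw hM hp hq hps hp1 hwi hqi hpw hqnorm hqw hzero hinner_p e1 e2 hM0 hc0
  linarith [hA, hB, e3, e4, e5, hsq]
end
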